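/- If a topological dynamical system (X,T) with invariant Borel probability measure μ is multi-r-sensitive for μ with sensitivity constant δ, then it is thickly r-sensitive for μ with the same constant δ. (Key step: for A of positive measure and L ∈ ℕ, each T^i A has positive measure since μ is T-invariant, so there is n_L ∈ ⋂_{i=0}^L N_T(T^i A, δ; r), giving {n_L, …, n_L + L} ⊆ N_T(A, δ; r).) -/
import Mathlib


open Metric MeasureTheory

def Thick (A : Set ℕ) : Prop := ∀ k : ℕ, ∃ n : ℕ, ∀ i ≤ k, n + i ∈ A

def NT {X : Type*} [MetricSpace X] (T : X → X) (U : Set X) (δ : ℝ) (r : ℕ) : Set ℕ :=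
  { n : ℕ | ∃ x : Fin r → X, (∀ i, x i ∈ U) ∧
      ∀ i j, i ≠ j → δ < dist (T^[n] (x i)) (T^[n] (x j)) }

/-- Multi-`r`-sensitivity for `μ` with constant `δ` implies thick `r`-sensitivity for `μ`
with the same constant. -/
theorem stmt7 {X : Type*} [MetricSpace X] [CompactSpace X] [MeasurableSpace X] [BorelSpace X]
    (T : X ≃ₜ X) (μ : Measure X) [IsProbabilityMeasure μ]
    (hinv : MeasurePreserving ⇑T μ μ)
    (r : ℕ) (hr : 2 ≤ r) (δ : ℝ) (hδ : 0 < δ)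
    (hmulti : ∀ (k : ℕ) (U : Fin k → Set X), (∀ i, MeasurableSet (U i)) →
      (∀ i, 0 < μ (U i)) → (⋂ i, NT ⇑T (U i) δ r).Nonempty) :
    ∀ U : Set X, MeasurableSet U → 0 < μ U → Thick (NT ⇑T U δ r) := by
  intro U hU hμ k
  have hinv' : MeasurePreserving ⇑T.toMeasurableEquiv μ μ := hinv
  have hTsymm : MeasurePreserving ⇑T.symm μ μ := hinv'.symm T.toMeasurableEquiv
  set V : Fin (k + 1) → Set X := fun i => (⇑T.symm)^[(i : ℕ)] ⁻¹' U with hV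
  have hmeas : ∀ i, MeasurableSet (V i) := fun i =>
    hU.preimage (hTsymm.iterate (i : ℕ)).measurable
  have hpos : ∀ i, 0 < μ (V i) := by
    intro i
    have := (hTsymm.iterate (i : ℕ)).measure_preimage hU.nullMeasurableSet
    rw [hV]
    simpa [this] using hμ
  obtain ⟨n, hn⟩ := hmulti (k + 1) V hmeas hpos
  refine ⟨n, fun i hi => ?_⟩
  have hni := Set.mem_iInter.1 hn ⟨i, by omega⟩
  obtain ⟨x, hxU, hxd⟩ := hni
  have hli : Function.LeftInverse ((⇑T)^[i]) ((⇑T.symm)^[i]) :=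
    Function.LeftInverse.iterate T.symm.left_inv i
  have key : ∀ y, (⇑T)^[n + i] ((⇑T.symm)^[i] y) = (⇑T)^[n] y := by
    intro y
    rw [Function.iterate_add_apply, hli y]
  refine ⟨fun j => (⇑T.symm)^[i] (x j), fun j => hxU j, fun a b hab => ?_⟩
  rw [key, key]
  exact hxd a b hab
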